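/- Suppose n ≥ 3 agents and m ≥ 2 objects, and suppose every agent's preferences are single-minded dichotomous. Then for every t_L ∈ ℝ, the GVCG-t_L mechanism fails Pareto efficiency: there exists a profile of single-minded dichotomous preferences at which the GVCG-t_L outcome is Pareto dominated by another outcome profile. -/

import Mathlib

open Finset

/-- A dichotomous preference over outcomes (bundle, payment). -/
structure DichPref (m : ℕ) where
  /-- the family of acceptable bundles -/
  S : Set (Finset (Fin m))
  /-- the willingness-to-pay map -/
  w : ℝ → ℝ
  /-- the weak preference relation over outcomes -/
  pref : (Finset (Fin m) × ℝ) → (Finset (Fin m) × ℝ) → Prop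
  S_nonempty : S.Nonempty
  empty_not_acc : (∅ : Finset (Fin m)) ∉ S
  supersets_closed : ∀ A ∈ S, ∀ B : Finset (Fin m), A ⊆ B → B ∈ S
  w_pos : ∀ t : ℝ, 0 < w t
  total : ∀ x y, pref x y ∨ pref y x
  transitive : ∀ x y z, pref x y → pref y z → pref x z
  money_mono : ∀ (A : Finset (Fin m)) (t t' : ℝ), t < t' →
    pref (A, t) (A, t') ∧ ¬ pref (A, t') (A, t)
  indiff_unacc : ∀ A ∉ S, ∀ t : ℝ, pref (A, t) (∅, t) ∧ pref (∅, t) (A, t)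
  indiff_acc : ∀ A ∈ S, ∀ t : ℝ, pref (A, t + w t) (∅, t) ∧ pref (∅, t) (A, t + w t)

open Classical in
/-- Willingness to pay at payment level `t`. -/
noncomputable def WP {m : ℕ} (R : DichPref m) (A : Finset (Fin m)) (t : ℝ) : ℝ :=
  if A ∈ R.S then R.w t else 0

/-- An allocation consists of pairwise-disjoint bundles. -/
def DisjointAlloc {n m : ℕ} (A : Fin n → Finset (Fin m)) : Prop :=
  ∀ i j : Fin n, i ≠ j → Disjoint (A i) (A j)

/-- max over allocations of the sum of others' willingness to pay. -/
noncomputable def maxExt {n m : ℕ} (Rp : Fin n → DichPref m) (i : Fin n) (tL : ℝ) : ℝ :=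
  sSup {x : ℝ | ∃ A : Fin n → Finset (Fin m), DisjointAlloc A ∧
    x = ∑ j ∈ Finset.univ.erase i, WP (Rp j) (A j) tL}

/-- `(f,p)` is a GVCG mechanism with loser's payment `tL`. -/
def IsGVCG {n m : ℕ} (f : (Fin n → DichPref m) → Fin n → Finset (Fin m))
    (p : (Fin n → DichPref m) → Fin n → ℝ) (tL : ℝ) : Prop :=
  ∀ Rp : Fin n → DichPref m,
    DisjointAlloc (f Rp) ∧
    (∀ A : Fin n → Finset (Fin m), DisjointAlloc A →
      ∑ i, WP (Rp i) (A i) tL ≤ ∑ i, WP (Rp i) (f Rp i) tL) ∧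
    (∀ i, p Rp i = tL + maxExt Rp i tL - ∑ j ∈ Finset.univ.erase i, WP (Rp j) (f Rp j) tL)

/-- `(A',t')` Pareto dominates `(A,t)` at profile `Rp`. -/
def Dominates {n m : ℕ} (Rp : Fin n → DichPref m)
    (A : Fin n → Finset (Fin m)) (t : Fin n → ℝ)
    (A' : Fin n → Finset (Fin m)) (t' : Fin n → ℝ) : Prop :=
  DisjointAlloc A' ∧ (∀ i, (Rp i).pref (A' i, t' i) (A i, t i)) ∧
  (∑ i, t i ≤ ∑ i, t' i) ∧
  ((∃ i, ¬ (Rp i).pref (A i, t i) (A' i, t' i)) ∨ ∑ i, t i < ∑ i, t' i)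

/-- single-minded dichotomous preference: unique minimal acceptable bundle. -/
def IsSM {m : ℕ} (R : DichPref m) : Prop :=
  ∃ S0 : Finset (Fin m), S0 ≠ ∅ ∧ R.S = {A : Finset (Fin m) | S0 ⊆ A}

/-- positive income effect: `w` weakly decreasing. -/
def PIE {m : ℕ} (R : DichPref m) : Prop :=
  ∀ t t' : ℝ, t' < t → R.w t ≤ R.w t'


open Finset

-- ====== auxiliary development (to be placed above the theorem) ======

noncomputable def wS (tL : ℝ) : ℝ → ℝ := fun t =>
  if t ≤ tL - 1/10 then 3/5 else if t ≤ tL then 1 + 4*(t - tL) else 1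

noncomputable def psiS (tL : ℝ) : ℝ → ℝ := fun s =>
  if s ≤ tL + 1/2 then s - 3/5 else if s ≤ tL + 1 then (s + 4*tL - 1)/5 else s - 1

lemma wS_pos (tL : ℝ) : ∀ t, 0 < wS tL t := by
  intro t; unfold wS; split_ifs <;> norm_num <;> linarith

lemma wS_tL (tL : ℝ) : wS tL tL = 1 := by
  unfold wS; split_ifs <;> [linarith; ring; rfl]

lemma psiS_mono (tL : ℝ) : StrictMono (psiS tL) := by
  intro a b hab; unfold psiS; split_ifs <;> linarith

lemma psiS_wS (tL : ℝ) : ∀ t, psiS tL (t + wS tL t) = t := by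
  intro t; unfold psiS wS; split_ifs <;> linarith

lemma psiS_half (tL : ℝ) : psiS tL (tL + 1/2) = tL - 1/10 := by
  unfold psiS; split_ifs <;> linarith

noncomputable def mkPref {m : ℕ} (S0 : Finset (Fin m)) (hS0 : S0 ≠ ∅) (w ψ : ℝ → ℝ)
    (hw : ∀ t, 0 < w t) (hmono : StrictMono ψ) (hinv : ∀ t, ψ (t + w t) = t) :
    DichPref m where
  S := {A | S0 ⊆ A}
  w := w
  pref := fun x y => (if S0 ⊆ x.1 then ψ x.2 else x.2) ≤ (if S0 ⊆ y.1 then ψ y.2 else y.2)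
  S_nonempty := ⟨S0, by simp⟩
  empty_not_acc := by simp [Finset.subset_empty, hS0]
  supersets_closed := fun A hA B hAB => Set.mem_setOf_eq ▸ (Set.mem_setOf_eq ▸ hA).trans hAB
  w_pos := hw
  total := fun x y => le_total _ _
  transitive := fun x y z h1 h2 => le_trans h1 h2
  money_mono := by
    intro A t t' h
    refine ⟨?_, ?_⟩
    · show (if S0 ⊆ A then ψ t else t) ≤ (if S0 ⊆ A then ψ t' else t')
      split_ifs with hs
      exacts [(hmono h).le, h.le]
    · show ¬ ((if S0 ⊆ A then ψ t' else t') ≤ (if S0 ⊆ A then ψ t else t))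
      split_ifs with hs
      exacts [not_le.mpr (hmono h), not_le.mpr h]
  indiff_unacc := by
    intro A hA t
    have h1 : ¬ S0 ⊆ A := hA
    have h2 : ¬ S0 ⊆ (∅ : Finset (Fin m)) := by simp [Finset.subset_empty, hS0]
    constructor <;> · show (if _ then _ else _) ≤ (if _ then _ else _)
                      simp [h1, h2]
  indiff_acc := by
    intro A hA t
    have h1 : S0 ⊆ A := hA
    have h2 : ¬ S0 ⊆ (∅ : Finset (Fin m)) := by simp [Finset.subset_empty, hS0]
    constructor <;> · show (if _ then _ else _) ≤ (if _ then _ else _)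
                      simp [h1, h2, hinv t]

lemma WP_mkPref {m : ℕ} (S0 : Finset (Fin m)) (hS0 : S0 ≠ ∅) (w ψ : ℝ → ℝ)
    (hw : ∀ t, 0 < w t) (hmono : StrictMono ψ) (hinv : ∀ t, ψ (t + w t) = t)
    (A : Finset (Fin m)) (t : ℝ) :
    WP (mkPref S0 hS0 w ψ hw hmono hinv) A t = if S0 ⊆ A then w t else 0 := by
  unfold WP mkPref
  simp [Set.mem_setOf_eq]

lemma pref_mkPref {m : ℕ} (S0 : Finset (Fin m)) (hS0 : S0 ≠ ∅) (w ψ : ℝ → ℝ)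
    (hw : ∀ t, 0 < w t) (hmono : StrictMono ψ) (hinv : ∀ t, ψ (t + w t) = t)
    (x y : Finset (Fin m) × ℝ) :
    (mkPref S0 hS0 w ψ hw hmono hinv).pref x y ↔
      (if S0 ⊆ x.1 then ψ x.2 else x.2) ≤ (if S0 ⊆ y.1 then ψ y.2 else y.2) := Iff.rfl

noncomputable def prof (m : ℕ) (hm : 2 ≤ m) (tL : ℝ) (n : ℕ) : Fin n → DichPref m := fun i =>
  if i.val = 0 then
    mkPref {(⟨0, by omega⟩ : Fin m)} (by simp) (wS tL) (psiS tL)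
      (wS_pos tL) (psiS_mono tL) (psiS_wS tL)
  else if i.val = 1 then
    mkPref {(⟨1, by omega⟩ : Fin m)} (by simp) (wS tL) (psiS tL)
      (wS_pos tL) (psiS_mono tL) (psiS_wS tL)
  else
    mkPref {(⟨0, by omega⟩ : Fin m), (⟨1, by omega⟩ : Fin m)} (by simp)
      (fun _ => 3/2) (fun s => s - 3/2)
      (fun t => by norm_num) (show StrictMono (fun s : ℝ => s - 3/2) from fun a b hab => by simpa using hab) (fun t => by ring)

lemma sum_three {n : ℕ} (h0 : 0 < n) (h1 : 1 < n) (h2 : 2 < n) (g : Fin n → ℝ)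
    (hrest : ∀ j : Fin n, j.val ≠ 0 → j.val ≠ 1 → j.val ≠ 2 → g j = 0) :
    ∑ i, g i = g ⟨0, h0⟩ + g ⟨1, h1⟩ + g ⟨2, h2⟩ := by
  classical
  have hsub : ({⟨0, h0⟩, ⟨1, h1⟩, ⟨2, h2⟩} : Finset (Fin n)) ⊆ univ := subset_univ _
  rw [← Finset.sum_subset hsub ?hz]
  · rw [Finset.sum_insert (by simp [Fin.ext_iff]), Finset.sum_insert (by simp [Fin.ext_iff]),
      Finset.sum_singleton, add_assoc]
  · intro x _ hx
    simp only [Finset.mem_insert, Finset.mem_singleton, Fin.ext_iff] at hx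
    push_neg at hx
    exact hrest x hx.1 hx.2.1 hx.2.2

lemma WP_nonneg {m : ℕ} (R : DichPref m) (A : Finset (Fin m)) (t : ℝ) : 0 ≤ WP R A t := by
  unfold WP; split_ifs
  exacts [(R.w_pos t).le, le_rfl]

/-- With `n ≥ 3` agents and `m ≥ 2` objects, every GVCG-`tL` mechanism fails Pareto
efficiency at some profile of single-minded dichotomous preferences. -/
theorem stmt_8 (n m : ℕ) (hn : 3 ≤ n) (hm : 2 ≤ m) (tL : ℝ)
    (f : (Fin n → DichPref m) → Fin n → Finset (Fin m))
    (p : (Fin n → DichPref m) → Fin n → ℝ)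
    (hG : IsGVCG f p tL) :
    ∃ Rp : Fin n → DichPref m, (∀ i, IsSM (Rp i)) ∧
      ∃ (A' : Fin n → Finset (Fin m)) (t' : Fin n → ℝ),
        Dominates Rp (f Rp) (p Rp) A' t' := by
  classical
  have h0n : 0 < n := by omega
  have h1n : 1 < n := by omega
  have h2n : 2 < n := by omega
  have h0m : 0 < m := by omega
  have h1m : 1 < m := by omega
  set o0 : Fin m := ⟨0, h0m⟩ with ho0def
  set o1 : Fin m := ⟨1, h1m⟩ with ho1def
  have ho01 : o0 ≠ o1 := by simp [ho0def, ho1def, Fin.ext_iff]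
  set Rp : Fin n → DichPref m := prof m hm tL n with hRpdef
  -- WP formulas
  have hWPa : ∀ i : Fin n, i.val = 0 → ∀ A, WP (Rp i) A tL = if o0 ∈ A then 1 else 0 := by
    intro i hi A
    rw [hRpdef]
    simp only [prof, hi, if_true]
    rw [WP_mkPref, wS_tL]
    simp [Finset.singleton_subset_iff, ho0def]
  have hWPb : ∀ i : Fin n, i.val ≠ 0 → i.val = 1 → ∀ A,
      WP (Rp i) A tL = if o1 ∈ A then 1 else 0 := by
    intro i hi0 hi1 A
    rw [hRpdef]
    simp only [prof, hi1, Nat.one_ne_zero, if_false, if_true]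
    rw [WP_mkPref, wS_tL]
    simp [Finset.singleton_subset_iff, ho1def]
  have hWPc : ∀ i : Fin n, i.val ≠ 0 → i.val ≠ 1 → ∀ A,
      WP (Rp i) A tL = if o0 ∈ A ∧ o1 ∈ A then 3/2 else 0 := by
    intro i hi0 hi1 A
    rw [hRpdef]
    simp only [prof, hi0, hi1, if_false]
    rw [WP_mkPref]
    simp [Finset.insert_subset_iff, Finset.singleton_subset_iff, ho0def, ho1def]
  have hWPempty : ∀ i : Fin n, WP (Rp i) (∅ : Finset (Fin m)) tL = 0 := by
    intro i
    by_cases h0 : i.val = 0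
    · rw [hWPa i h0]; simp
    · by_cases h1 : i.val = 1
      · rw [hWPb i h0 h1]; simp
      · rw [hWPc i h0 h1]; simp
  -- termwise bounds
  have hle1 : ∀ (i : Fin n) (A : Finset (Fin m)),
      WP (Rp i) A tL ≤ (if o0 ∈ A then 1 else 0) + (if o1 ∈ A then 1 else 0) := by
    intro i A
    by_cases h0 : i.val = 0
    · rw [hWPa i h0]; split_ifs <;> norm_num
    · by_cases h1 : i.val = 1
      · rw [hWPb i h0 h1]; split_ifs <;> norm_num
      · rw [hWPc i h0 h1]
        split_ifs with h h2 h3 h4 h5 <;> norm_num <;> tauto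
  have hle2 : ∀ (i : Fin n) (A : Finset (Fin m)), i.val ≠ 0 →
      WP (Rp i) A tL ≤ (3/2) * (if o1 ∈ A then 1 else 0) := by
    intro i A h0
    by_cases h1 : i.val = 1
    · rw [hWPb i h0 h1]; split_ifs <;> norm_num
    · rw [hWPc i h0 h1]
      split_ifs with h h2 <;> norm_num <;> tauto
  have hle3 : ∀ (i : Fin n) (A : Finset (Fin m)), i.val ≠ 1 →
      WP (Rp i) A tL ≤ (3/2) * (if o0 ∈ A then 1 else 0) := by
    intro i A h1
    by_cases h0 : i.val = 0
    · rw [hWPa i h0]; split_ifs <;> norm_num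
    · rw [hWPc i h0 h1]
      split_ifs with h h2 <;> norm_num <;> tauto
  -- indicator sums
  have hind : ∀ (A : Fin n → Finset (Fin m)), DisjointAlloc A → ∀ o : Fin m,
      ∑ i, (if o ∈ A i then (1:ℝ) else 0) ≤ 1 := by
    intro A hA o
    by_cases h : ∃ i, o ∈ A i
    · obtain ⟨i, hi⟩ := h
      rw [← Finset.add_sum_erase _ _ (mem_univ i)]
      have hz : ∑ j ∈ univ.erase i, (if o ∈ A j then (1:ℝ) else 0) = 0 := by
        apply Finset.sum_eq_zero
        intro j hj
        have hji : j ≠ i := (Finset.mem_erase.mp hj).1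
        have : o ∉ A j := fun hoj => (Finset.disjoint_left.mp (hA j i hji) hoj) hi
        simp [this]
      rw [hz, add_zero]
      split_ifs <;> norm_num
    · push_neg at h
      rw [Finset.sum_eq_zero (fun j _ => by simp [h j])]
      norm_num
  -- global welfare bound
  have hbound : ∀ A : Fin n → Finset (Fin m), DisjointAlloc A →
      ∑ i, WP (Rp i) (A i) tL ≤ 2 := by
    intro A hA
    calc ∑ i, WP (Rp i) (A i) tL
        ≤ ∑ i, ((if o0 ∈ A i then (1:ℝ) else 0) + (if o1 ∈ A i then 1 else 0)) :=
          Finset.sum_le_sum (fun i _ => hle1 i (A i))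
      _ = (∑ i, if o0 ∈ A i then (1:ℝ) else 0) + ∑ i, if o1 ∈ A i then (1:ℝ) else 0 :=
          Finset.sum_add_distrib
      _ ≤ 1 + 1 := add_le_add (hind A hA o0) (hind A hA o1)
      _ = 2 := by norm_num
  -- the welfare-2 allocation
  set A2 : Fin n → Finset (Fin m) :=
    fun i => if i.val = 0 then {o0} else if i.val = 1 then {o1} else ∅ with hA2def
  have hA2disj : DisjointAlloc A2 := by
    intro i j hij
    have hvij : i.val ≠ j.val := fun h => hij (Fin.ext h)
    rw [hA2def]
    dsimp only
    split_ifs <;>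
      first
        | omega
        | simp [Finset.disjoint_singleton, ho01, ho01.symm]
  have hA2sum : ∑ i, WP (Rp i) (A2 i) tL = 2 := by
    rw [sum_three h0n h1n h2n _ (fun j hj0 hj1 hj2 => by
      have : A2 j = ∅ := by rw [hA2def]; simp [hj0, hj1]
      rw [this, hWPempty])]
    have e0 : A2 ⟨0, h0n⟩ = {o0} := by simp [hA2def]
    have e1 : A2 ⟨1, h1n⟩ = {o1} := by simp [hA2def]
    have e2 : A2 ⟨2, h2n⟩ = ∅ := by simp [hA2def]
    rw [e0, e1, e2, hWPa ⟨0, h0n⟩ rfl, hWPb ⟨1, h1n⟩ (by norm_num) rfl, hWPempty]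
    simp [ho01.symm]
    norm_num
  obtain ⟨hdisj, hopt, hpay⟩ := hG Rp
  have hoptsum : ∑ i, WP (Rp i) (f Rp i) tL = 2 :=
    le_antisymm (hbound _ hdisj) (hA2sum ▸ hopt A2 hA2disj)
  -- structure of f Rp
  have hq2 : ∀ j : Fin n, j.val ≠ 0 → j.val ≠ 1 → WP (Rp j) (f Rp j) tL = 0 := by
    intro j hj0 hj1
    by_contra hne
    rw [hWPc j hj0 hj1] at hne
    have hsub : o0 ∈ f Rp j ∧ o1 ∈ f Rp j := by
      by_contra h; simp [h] at hne
    have hall : ∀ b : Fin n, b ≠ j → WP (Rp b) (f Rp b) tL = 0 := by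
      intro b hb
      have hdb := Finset.disjoint_left.mp (hdisj b j hb)
      by_cases hb0 : b.val = 0
      · rw [hWPa b hb0]
        have : o0 ∉ f Rp b := fun h => hdb h hsub.1
        simp [this]
      · by_cases hb1 : b.val = 1
        · rw [hWPb b hb0 hb1]
          have : o1 ∉ f Rp b := fun h => hdb h hsub.2
          simp [this]
        · rw [hWPc b hb0 hb1]
          have : o0 ∉ f Rp b := fun h => hdb h hsub.1
          simp [this]
    have hsingle : ∑ i, WP (Rp i) (f Rp i) tL = WP (Rp j) (f Rp j) tL :=
      Finset.sum_eq_single_of_mem j (mem_univ j) (fun b _ hb => hall b hb)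
    rw [hoptsum, hWPc j hj0 hj1, if_pos hsub] at hsingle
    norm_num at hsingle
  have hsum01 : WP (Rp ⟨0, h0n⟩) (f Rp ⟨0, h0n⟩) tL
      + WP (Rp ⟨1, h1n⟩) (f Rp ⟨1, h1n⟩) tL = 2 := by
    have := sum_three h0n h1n h2n (fun i => WP (Rp i) (f Rp i) tL)
      (fun j hj0 hj1 _ => hq2 j hj0 hj1)
    rw [hoptsum] at this
    rw [hq2 ⟨2, h2n⟩ (by norm_num) (by norm_num)] at this
    linarith
  have hmem0 : o0 ∈ f Rp ⟨0, h0n⟩ := by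
    by_contra h
    have e0 := hWPa ⟨0, h0n⟩ rfl (f Rp ⟨0, h0n⟩)
    rw [if_neg h] at e0
    have e1 := hWPb ⟨1, h1n⟩ (by norm_num) rfl (f Rp ⟨1, h1n⟩)
    rw [e0, e1] at hsum01
    split_ifs at hsum01 <;> norm_num at hsum01
  have hmem1 : o1 ∈ f Rp ⟨1, h1n⟩ := by
    by_contra h
    have e1 := hWPb ⟨1, h1n⟩ (by norm_num) rfl (f Rp ⟨1, h1n⟩)
    rw [if_neg h] at e1
    have e0 := hWPa ⟨0, h0n⟩ rfl (f Rp ⟨0, h0n⟩)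
    rw [e0, e1] at hsum01
    split_ifs at hsum01 <;> norm_num at hsum01
  have hq0 : WP (Rp ⟨0, h0n⟩) (f Rp ⟨0, h0n⟩) tL = 1 := by
    rw [hWPa ⟨0, h0n⟩ rfl, if_pos hmem0]
  have hq1 : WP (Rp ⟨1, h1n⟩) (f Rp ⟨1, h1n⟩) tL = 1 := by
    rw [hWPb ⟨1, h1n⟩ (by norm_num) rfl, if_pos hmem1]
  -- erase-sum helper
  have hErase : ∀ (i : Fin n) (g : Fin n → ℝ),
      ∑ j ∈ univ.erase i, g j = (∑ j, g j) - g i :=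
    fun i g => Finset.sum_erase_eq_sub (mem_univ i)
  -- the "serve only agent 2" allocation
  set A3 : Fin n → Finset (Fin m) :=
    fun j => if j.val = 2 then ({o0, o1} : Finset (Fin m)) else ∅ with hA3def
  have hA3disj : DisjointAlloc A3 := by
    intro i j hij
    have hvij : i.val ≠ j.val := fun h => hij (Fin.ext h)
    rw [hA3def]
    dsimp only
    split_ifs <;> first | omega | simp
  have hA3sum : ∑ i, WP (Rp i) (A3 i) tL = 3/2 := by
    have hz : ∀ b : Fin n, b ≠ ⟨2, h2n⟩ → WP (Rp b) (A3 b) tL = 0 := by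
      intro b hb
      have : A3 b = ∅ := by
        rw [hA3def]; dsimp only
        rw [if_neg (fun h => hb (Fin.ext h))]
      rw [this, hWPempty]
    rw [Finset.sum_eq_single_of_mem ⟨2, h2n⟩ (mem_univ _) (fun b _ hb => hz b hb)]
    have e3 : A3 ⟨2, h2n⟩ = {o0, o1} := by simp [hA3def]
    rw [e3, hWPc ⟨2, h2n⟩ (by norm_num) (by norm_num)]
    simp
  -- maxExt values
  have hME0 : maxExt Rp ⟨0, h0n⟩ tL = 3/2 := by
    have hub : ∀ x ∈ {x : ℝ | ∃ A : Fin n → Finset (Fin m), DisjointAlloc A ∧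
        x = ∑ j ∈ Finset.univ.erase ⟨0, h0n⟩, WP (Rp j) (A j) tL}, x ≤ 3/2 := by
      rintro x ⟨A, hA, rfl⟩
      calc ∑ j ∈ univ.erase ⟨0, h0n⟩, WP (Rp j) (A j) tL
          ≤ ∑ j ∈ univ.erase ⟨0, h0n⟩, (3/2) * (if o1 ∈ A j then 1 else 0) := by
            apply Finset.sum_le_sum
            intro j hj
            exact hle2 j (A j) (fun h => (Finset.mem_erase.mp hj).1 (Fin.ext h))
        _ ≤ ∑ j, (3/2) * (if o1 ∈ A j then 1 else 0) := by
            apply Finset.sum_le_sum_of_subset_of_nonneg (subset_univ _)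
            intro j _ _
            split_ifs <;> norm_num
        _ = (3/2) * ∑ j, (if o1 ∈ A j then 1 else 0) := by rw [Finset.mul_sum]
        _ ≤ (3/2) * 1 := by
            have := hind A hA o1
            linarith
        _ = 3/2 := by norm_num
    have hmem : (3/2 : ℝ) ∈ {x : ℝ | ∃ A : Fin n → Finset (Fin m), DisjointAlloc A ∧
        x = ∑ j ∈ Finset.univ.erase ⟨0, h0n⟩, WP (Rp j) (A j) tL} := by
      refine ⟨A3, hA3disj, ?_⟩
      rw [hErase, hA3sum]
      have : A3 ⟨0, h0n⟩ = ∅ := by simp [hA3def]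
      rw [this, hWPempty]
      ring
    exact le_antisymm (csSup_le ⟨_, hmem⟩ hub) (le_csSup ⟨_, hub⟩ hmem)
  have hME1 : maxExt Rp ⟨1, h1n⟩ tL = 3/2 := by
    have hub : ∀ x ∈ {x : ℝ | ∃ A : Fin n → Finset (Fin m), DisjointAlloc A ∧
        x = ∑ j ∈ Finset.univ.erase ⟨1, h1n⟩, WP (Rp j) (A j) tL}, x ≤ 3/2 := by
      rintro x ⟨A, hA, rfl⟩
      calc ∑ j ∈ univ.erase ⟨1, h1n⟩, WP (Rp j) (A j) tL
          ≤ ∑ j ∈ univ.erase ⟨1, h1n⟩, (3/2) * (if o0 ∈ A j then 1 else 0) := by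
            apply Finset.sum_le_sum
            intro j hj
            exact hle3 j (A j) (fun h => (Finset.mem_erase.mp hj).1 (Fin.ext h))
        _ ≤ ∑ j, (3/2) * (if o0 ∈ A j then 1 else 0) := by
            apply Finset.sum_le_sum_of_subset_of_nonneg (subset_univ _)
            intro j _ _
            split_ifs <;> norm_num
        _ = (3/2) * ∑ j, (if o0 ∈ A j then 1 else 0) := by rw [Finset.mul_sum]
        _ ≤ (3/2) * 1 := by
            have := hind A hA o0
            linarith
        _ = 3/2 := by norm_num
    have hmem : (3/2 : ℝ) ∈ {x : ℝ | ∃ A : Fin n → Finset (Fin m), DisjointAlloc A ∧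
        x = ∑ j ∈ Finset.univ.erase ⟨1, h1n⟩, WP (Rp j) (A j) tL} := by
      refine ⟨A3, hA3disj, ?_⟩
      rw [hErase, hA3sum]
      have : A3 ⟨1, h1n⟩ = ∅ := by simp [hA3def]
      rw [this, hWPempty]
      ring
    exact le_antisymm (csSup_le ⟨_, hmem⟩ hub) (le_csSup ⟨_, hub⟩ hmem)
  have hMEj : ∀ j : Fin n, j.val ≠ 0 → j.val ≠ 1 → maxExt Rp j tL = 2 := by
    intro j hj0 hj1
    have hub : ∀ x ∈ {x : ℝ | ∃ A : Fin n → Finset (Fin m), DisjointAlloc A ∧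
        x = ∑ k ∈ Finset.univ.erase j, WP (Rp k) (A k) tL}, x ≤ 2 := by
      rintro x ⟨A, hA, rfl⟩
      rw [hErase]
      have h1 := hbound A hA
      have h2 := WP_nonneg (Rp j) (A j) tL
      linarith
    have hmem : (2 : ℝ) ∈ {x : ℝ | ∃ A : Fin n → Finset (Fin m), DisjointAlloc A ∧
        x = ∑ k ∈ Finset.univ.erase j, WP (Rp k) (A k) tL} := by
      refine ⟨A2, hA2disj, ?_⟩
      rw [hErase, hA2sum]
      have : A2 j = ∅ := by simp [hA2def, hj0, hj1]
      rw [this, hWPempty]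
      ring
    exact le_antisymm (csSup_le ⟨_, hmem⟩ hub) (le_csSup ⟨_, hub⟩ hmem)
  -- payments
  have hp0 : p Rp ⟨0, h0n⟩ = tL + 1/2 := by
    rw [hpay ⟨0, h0n⟩, hErase, hoptsum, hME0, hq0]
    ring
  have hp1 : p Rp ⟨1, h1n⟩ = tL + 1/2 := by
    rw [hpay ⟨1, h1n⟩, hErase, hoptsum, hME1, hq1]
    ring
  have hpj : ∀ j : Fin n, j.val ≠ 0 → j.val ≠ 1 → p Rp j = tL := by
    intro j hj0 hj1
    rw [hpay j, hErase, hoptsum, hMEj j hj0 hj1, hq2 j hj0 hj1]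
    ring
  -- facts about non-winning bundles
  have hno0 : ∀ j : Fin n, j ≠ ⟨0, h0n⟩ → o0 ∉ f Rp j := by
    intro j hj h
    exact (Finset.disjoint_left.mp (hdisj j ⟨0, h0n⟩ hj) h) hmem0
  have hno1 : ∀ j : Fin n, j ≠ ⟨1, h1n⟩ → o1 ∉ f Rp j := by
    intro j hj h
    exact (Finset.disjoint_left.mp (hdisj j ⟨1, h1n⟩ hj) h) hmem1
  -- the dominating outcome
  set A' : Fin n → Finset (Fin m) :=
    fun j => if j.val = 2 then ({o0, o1} : Finset (Fin m)) else ∅ with hA'def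
  set t' : Fin n → ℝ :=
    fun j => if j.val = 0 then tL - 1/10 else if j.val = 1 then tL - 1/10
      else if j.val = 2 then tL + 3/2 else tL with ht'def
  refine ⟨Rp, ?_, A', t', ?_, ?_, ?_, ?_⟩
  · -- single-minded
    intro i
    rw [hRpdef]
    unfold prof
    split_ifs
    · exact ⟨{(⟨0, by omega⟩ : Fin m)}, by simp, rfl⟩
    · exact ⟨{(⟨1, by omega⟩ : Fin m)}, by simp, rfl⟩
    · exact ⟨{(⟨0, by omega⟩ : Fin m), (⟨1, by omega⟩ : Fin m)}, by simp, rfl⟩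
  · -- disjointness of A'
    exact hA3disj
  · -- everyone weakly better off
    intro i
    by_cases hi0 : i.val = 0
    · have hieq : i = ⟨0, h0n⟩ := Fin.ext hi0
      subst hieq
      have hA'i : A' (⟨0, h0n⟩ : Fin n) = ∅ := by simp [hA'def]
      have ht'i : t' (⟨0, h0n⟩ : Fin n) = tL - 1/10 := by simp [ht'def]
      rw [hA'i, ht'i, hp0, hRpdef]
      simp only [prof, Fin.val_mk, if_true]
      rw [pref_mkPref]
      have hne : ¬ ({o0} : Finset (Fin m)) ⊆ (∅ : Finset (Fin m)) := by
        simp [Finset.subset_empty]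
      have hyes : ({o0} : Finset (Fin m)) ⊆ f Rp ⟨0, h0n⟩ :=
        Finset.singleton_subset_iff.mpr hmem0
      rw [if_neg ?_, if_pos ?_]
      · rw [psiS_half]
      · exact hyes
      · exact hne
    · by_cases hi1 : i.val = 1
      · have hieq : i = ⟨1, h1n⟩ := Fin.ext hi1
        subst hieq
        have hA'i : A' (⟨1, h1n⟩ : Fin n) = ∅ := by simp [hA'def]
        have ht'i : t' (⟨1, h1n⟩ : Fin n) = tL - 1/10 := by simp [ht'def]
        rw [hA'i, ht'i, hp1, hRpdef]
        simp only [prof, Fin.val_mk, Nat.one_ne_zero, if_false, if_true]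
        rw [pref_mkPref]
        have hne : ¬ ({o1} : Finset (Fin m)) ⊆ (∅ : Finset (Fin m)) := by
          simp [Finset.subset_empty]
        have hyes : ({o1} : Finset (Fin m)) ⊆ f Rp ⟨1, h1n⟩ :=
          Finset.singleton_subset_iff.mpr hmem1
        rw [if_neg ?_, if_pos ?_]
        · rw [psiS_half]
        · exact hyes
        · exact hne
      · -- i.val ≥ 2
        have hne : ¬ ({o0, o1} : Finset (Fin m)) ⊆ f Rp i := by
          intro h
          exact hno0 i (fun he => hi0 (by rw [he])) (h (by simp))
        rw [hpj i hi0 hi1, hRpdef]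
        simp only [prof, hi0, hi1, if_false]
        rw [pref_mkPref]
        rw [if_neg hne]
        by_cases hi2 : i.val = 2
        · have hA'i : A' i = {o0, o1} := by simp [hA'def, hi2]
          have ht'i : t' i = tL + 3/2 := by simp [ht'def, hi0, hi1, hi2]
          rw [hA'i, ht'i, if_pos (Finset.Subset.refl _)]
          norm_num
        · have hA'i : A' i = ∅ := by simp [hA'def, hi2]
          have ht'i : t' i = tL := by simp [ht'def, hi0, hi1, hi2]
          have hne' : ¬ ({o0, o1} : Finset (Fin m)) ⊆ (∅ : Finset (Fin m)) := by
            simp [Finset.subset_empty]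
          rw [hA'i, ht'i, if_neg hne']
  · -- total payments weakly larger
    have hdiff : ∑ i, (t' i - p Rp i) = 3/10 := by
      rw [sum_three h0n h1n h2n _ (fun j hj0 hj1 hj2 => by
        have h1 : t' j = tL := by simp [ht'def, hj0, hj1, hj2]
        have h2 : p Rp j = tL := hpj j hj0 hj1
        rw [h1, h2]; ring)]
      have e0 : t' (⟨0, h0n⟩ : Fin n) = tL - 1/10 := by simp [ht'def]
      have e1 : t' (⟨1, h1n⟩ : Fin n) = tL - 1/10 := by simp [ht'def]
      have e2 : t' (⟨2, h2n⟩ : Fin n) = tL + 3/2 := by simp [ht'def]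
      rw [e0, e1, e2, hp0, hp1, hpj ⟨2, h2n⟩ (by norm_num) (by norm_num)]
      ring
    rw [Finset.sum_sub_distrib] at hdiff
    linarith
  · -- strictness
    right
    have hdiff : ∑ i, (t' i - p Rp i) = 3/10 := by
      rw [sum_three h0n h1n h2n _ (fun j hj0 hj1 hj2 => by
        have h1 : t' j = tL := by simp [ht'def, hj0, hj1, hj2]
        have h2 : p Rp j = tL := hpj j hj0 hj1
        rw [h1, h2]; ring)]
      have e0 : t' (⟨0, h0n⟩ : Fin n) = tL - 1/10 := by simp [ht'def]
      have e1 : t' (⟨1, h1n⟩ : Fin n) = tL - 1/10 := by simp [ht'def]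
      have e2 : t' (⟨2, h2n⟩ : Fin n) = tL + 3/2 := by simp [ht'def]
      rw [e0, e1, e2, hp0, hp1, hpj ⟨2, h2n⟩ (by norm_num) (by norm_num)]
      ring
    rw [Finset.sum_sub_distrib] at hdiff
    linarith
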